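/- If K is a positive semidefinite kernel on X and x₀ ∈ X has k_h(x₀,x₀) = 1/h · k(0) with k(0) > 0, then the localized posterior mean depends only on the training points xᵢ with k_h(xᵢ,x₀) > 0: if the weight of a training point is zero, removing that point from the formulas for m̃(x₀) and 𝒦̃(x₀,x₀) leaves them unchanged in the limit, i.e., as wᵢ → 0⁺ the i-th data point's contribution to K_{x₀X}(K_{XX} + σ²W⁻¹)⁻¹y vanishes. -/

import Mathlib

open Matrix Filter

section Aux

variable {m : Type*} [Fintype m] [DecidableEq m]

lemma aux_diag_det_unit {d : m → ℝ} (hd : ∀ i, d i ≠ 0) :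
    IsUnit (Matrix.diagonal d).det := by
  rw [Matrix.det_diagonal, isUnit_iff_ne_zero]
  exact Finset.prod_ne_zero_iff.mpr fun i _ => hd i

lemma aux_posdef {K : Matrix m m ℝ} (hK : K.PosSemidef) {σ2 : ℝ} (hσ : 0 < σ2)
    {d : m → ℝ} (hd : ∀ i, 0 < d i) :
    (K + σ2 • (Matrix.diagonal d)⁻¹).PosDef := by
  have h1 : (Matrix.diagonal d)⁻¹ = Matrix.diagonal (fun i => (d i)⁻¹) := by
    refine Matrix.inv_eq_right_inv ?_
    rw [Matrix.diagonal_mul_diagonal]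
    convert Matrix.diagonal_one with i
    exact mul_inv_cancel₀ (hd i).ne'
  have h2 : σ2 • Matrix.diagonal (fun i => (d i)⁻¹)
      = Matrix.diagonal (fun i => σ2 * (d i)⁻¹) := by
    rw [← Matrix.diagonal_smul]
    rfl
  rw [h1, h2]
  exact Matrix.PosDef.posSemidef_add hK (Matrix.posDef_diagonal_iff.mpr fun i => by
    have := hd i; positivity)

/-- Invertibility of `D K + σ² I` for `D = diagonal d` with nonnegative entries. -/
lemma aux_isUnit_det {K : Matrix m m ℝ} (hK : K.PosSemidef) {σ2 : ℝ} (hσ : 0 < σ2)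
    {d : m → ℝ} (hd : ∀ i, 0 ≤ d i) :
    IsUnit (Matrix.diagonal d * K + σ2 • 1).det := by
  rw [isUnit_iff_ne_zero]
  intro hdet
  obtain ⟨v, hv, hMv⟩ := (Matrix.exists_mulVec_eq_zero_iff).mpr hdet
  have h1 : Matrix.diagonal d *ᵥ (K *ᵥ v) + σ2 • v = 0 := by
    have := hMv
    rwa [Matrix.add_mulVec, ← Matrix.mulVec_mulVec, Matrix.smul_mulVec,
      Matrix.one_mulVec] at this
  set u := K *ᵥ v with hu
  have h2 : u ⬝ᵥ (Matrix.diagonal d *ᵥ u) + σ2 * (u ⬝ᵥ v) = 0 := by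
    have := congrArg (fun z => u ⬝ᵥ z) h1
    simpa [dotProduct_add, dotProduct_smul, smul_eq_mul] using this
  have hdu : 0 ≤ u ⬝ᵥ (Matrix.diagonal d *ᵥ u) := by
    rw [dotProduct]
    refine Finset.sum_nonneg fun i _ => ?_
    rw [Matrix.mulVec_diagonal]
    have := hd i
    nlinarith [sq_nonneg (u i)]
  have hvKv : 0 ≤ v ⬝ᵥ u := by simpa using hK.dotProduct_mulVec_nonneg v
  have huv : u ⬝ᵥ v = v ⬝ᵥ u := dotProduct_comm _ _
  have hz : v ⬝ᵥ (K *ᵥ v) = 0 := by rw [← hu]; nlinarith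
  have hKv : K *ᵥ v = 0 := (hK.dotProduct_mulVec_zero_iff v).mp (by simpa using hz)
  apply hv
  have h3 : σ2 • v = 0 := by simpa [hu, hKv] using h1
  rcases smul_eq_zero.mp h3 with h | h
  · exact absurd h (ne_of_gt hσ)
  · exact h

/-- The key algebraic identity `(K + σ² D⁻¹)⁻¹ = (D K + σ² I)⁻¹ D`. -/
lemma aux_key_inv {K : Matrix m m ℝ} (hK : K.PosSemidef) {σ2 : ℝ} (hσ : 0 < σ2)
    {d : m → ℝ} (hd : ∀ i, 0 < d i) :
    (K + σ2 • (Matrix.diagonal d)⁻¹)⁻¹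
      = (Matrix.diagonal d * K + σ2 • 1)⁻¹ * Matrix.diagonal d := by
  have hDdet : IsUnit (Matrix.diagonal d).det := aux_diag_det_unit fun i => (hd i).ne'
  have hmul : Matrix.diagonal d * (K + σ2 • (Matrix.diagonal d)⁻¹)
      = Matrix.diagonal d * K + σ2 • 1 := by
    rw [Matrix.mul_add, Matrix.mul_smul, Matrix.mul_nonsing_inv _ hDdet]
  rw [← hmul, Matrix.mul_inv_rev, Matrix.mul_assoc, Matrix.nonsing_inv_mul _ hDdet,
    Matrix.mul_one]

end Aux

/-- As the localizing weight of the last data point tends to `0⁺`, the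
localized GP posterior mean computed with all `n+1` points tends to the
posterior mean computed with the first `n` points only. -/
theorem zero_weight_point_drops_out {n : ℕ}
    (K : Matrix (Fin (n + 1)) (Fin (n + 1)) ℝ) (hK : K.PosSemidef)
    (y kx : Fin (n + 1) → ℝ) (σ2 : ℝ) (hσ : 0 < σ2)
    (w : Fin n → ℝ) (hw : ∀ i, 0 < w i) :
    Tendsto
      (fun t : ℝ =>
        kx ⬝ᵥ ((K + σ2 • (Matrix.diagonal
          (Fin.snoc w t : Fin (n + 1) → ℝ))⁻¹)⁻¹.mulVec y))
      (nhdsWithin 0 (Set.Ioi 0))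
      (nhds ((kx ∘ Fin.castSucc) ⬝ᵥ
        ((K.submatrix Fin.castSucc Fin.castSucc +
          σ2 • (Matrix.diagonal w)⁻¹)⁻¹.mulVec (y ∘ Fin.castSucc)))) := by
  -- notation
  set K' := K.submatrix Fin.castSucc Fin.castSucc with hK'def
  have hK' : K'.PosSemidef := by
    refine Matrix.PosSemidef.of_dotProduct_mulVec_nonneg ?_ ?_
    · have := hK.1
      ext i j
      simpa [hK'def, Matrix.submatrix_apply] using congrFun (congrFun this.symm _) _
    · intro x
      have := hK.dotProduct_mulVec_nonneg (Fin.snoc x 0)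
      have hcalc : (Fin.snoc x 0 : Fin (n+1) → ℝ) ⬝ᵥ (K *ᵥ (Fin.snoc x 0))
          = x ⬝ᵥ (K' *ᵥ x) := by
        rw [dotProduct, Fin.sum_univ_castSucc]
        simp only [Fin.snoc_castSucc, Fin.snoc_last, zero_mul, add_zero]
        refine Finset.sum_congr rfl fun i _ => ?_
        congr 1
        rw [Matrix.mulVec, dotProduct, Matrix.mulVec, dotProduct, Fin.sum_univ_castSucc]
        simp [hK'def]
      simpa [hcalc] using this
  -- the modified function
  set D : ℝ → Matrix (Fin (n+1)) (Fin (n+1)) ℝ :=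
    fun t => Matrix.diagonal (Fin.snoc w t : Fin (n+1) → ℝ) with hDdef
  set F : ℝ → ℝ := fun t => kx ⬝ᵥ (((D t * K + σ2 • 1)⁻¹ * D t) *ᵥ y) with hFdef
  have hDcont : Continuous D := by
    refine Continuous.matrix_diagonal ?_
    refine continuous_pi fun i => ?_
    refine Fin.lastCases ?_ (fun j => ?_) i
    · simpa using continuous_id'
    · simpa using (continuous_const : Continuous fun _ : ℝ => w j)
  -- the functions agree on `Ioi 0`
  have hEq : ∀ t ∈ Set.Ioi (0:ℝ),
      kx ⬝ᵥ ((K + σ2 • (Matrix.diagonal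
        (Fin.snoc w t : Fin (n + 1) → ℝ))⁻¹)⁻¹.mulVec y) = F t := by
    intro t ht
    have hpos : ∀ i, 0 < (Fin.snoc w t : Fin (n+1) → ℝ) i := by
      intro i
      refine Fin.lastCases ?_ (fun j => ?_) i
      · simpa using ht
      · simpa using hw j
    rw [hFdef]
    simp only
    rw [aux_key_inv hK hσ hpos]
  -- value at 0
  have hd0 : ∀ i, 0 ≤ (Fin.snoc w (0:ℝ) : Fin (n+1) → ℝ) i := by
    intro i
    refine Fin.lastCases ?_ (fun j => ?_) i
    · simp
    · simpa using (hw j).le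
  have hM0 : IsUnit (D 0 * K + σ2 • 1).det := aux_isUnit_det hK hσ hd0
  have hMw : IsUnit (Matrix.diagonal w * K' + σ2 • 1).det :=
    aux_isUnit_det hK' hσ fun i => (hw i).le
  -- the reduced solution
  set z : Fin n → ℝ :=
    (Matrix.diagonal w * K' + σ2 • 1)⁻¹ *ᵥ (Matrix.diagonal w *ᵥ (y ∘ Fin.castSucc))
    with hzdef
  have hzsol : (Matrix.diagonal w * K' + σ2 • 1) *ᵥ z
      = Matrix.diagonal w *ᵥ (y ∘ Fin.castSucc) := by
    rw [hzdef, Matrix.mulVec_mulVec, Matrix.mul_nonsing_inv _ hMw, Matrix.one_mulVec]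
  -- snoc z 0 solves the big system
  have hKsz : ∀ i, (K *ᵥ (Fin.snoc z 0 : Fin (n+1) → ℝ)) i
      = ∑ k : Fin n, K i (Fin.castSucc k) * z k := by
    intro i
    rw [Matrix.mulVec, dotProduct, Fin.sum_univ_castSucc]
    simp
  have hbig : (D 0 * K + σ2 • 1) *ᵥ (Fin.snoc z 0 : Fin (n+1) → ℝ)
      = D 0 *ᵥ y := by
    funext i
    rw [Matrix.add_mulVec, ← Matrix.mulVec_mulVec, Matrix.smul_mulVec,
      Matrix.one_mulVec]
    simp only [Pi.add_apply, Pi.smul_apply, smul_eq_mul]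
    rw [hDdef]
    simp only [Matrix.mulVec_diagonal]
    refine Fin.lastCases ?_ (fun j => ?_) i
    · simp
    · rw [Fin.snoc_castSucc, Fin.snoc_castSucc, hKsz]
      have := congrFun hzsol j
      rw [Matrix.add_mulVec, ← Matrix.mulVec_mulVec, Matrix.smul_mulVec,
        Matrix.one_mulVec] at this
      simp only [Pi.add_apply, Pi.smul_apply, smul_eq_mul, Matrix.mulVec_diagonal] at this
      have hKz : (K' *ᵥ z) j = ∑ k : Fin n, K (Fin.castSucc j) (Fin.castSucc k) * z k := by
        rw [Matrix.mulVec, dotProduct]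
        simp [hK'def]
      rw [hKz] at this
      rw [this]
      simp
  have hsol : ((D 0 * K + σ2 • 1)⁻¹ * D 0) *ᵥ y = (Fin.snoc z 0 : Fin (n+1) → ℝ) := by
    rw [← Matrix.mulVec_mulVec, ← hbig, Matrix.mulVec_mulVec,
      Matrix.nonsing_inv_mul _ hM0, Matrix.one_mulVec]
  have hF0 : F 0 = (kx ∘ Fin.castSucc) ⬝ᵥ
      ((K' + σ2 • (Matrix.diagonal w)⁻¹)⁻¹.mulVec (y ∘ Fin.castSucc)) := by
    rw [hFdef]
    simp only
    rw [hsol, aux_key_inv hK' hσ hw, ← Matrix.mulVec_mulVec]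
    rw [dotProduct, Fin.sum_univ_castSucc]
    simp only [Fin.snoc_last, mul_zero, add_zero, Fin.snoc_castSucc]
    rw [dotProduct, hzdef]
    rfl
  -- continuity of F at 0
  have hcont : ContinuousAt F 0 := by
    have hinv : ContinuousAt (fun M : Matrix (Fin (n+1)) (Fin (n+1)) ℝ => M⁻¹)
        (D 0 * K + σ2 • 1) := by
      refine continuousAt_matrix_inv _ ?_
      rw [Ring.inverse_eq_inv']
      exact continuousAt_inv₀ (by simpa [isUnit_iff_ne_zero] using hM0)
    have hg : Continuous (fun t => D t * K + σ2 • 1) :=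
      ((hDcont.mul continuous_const).add continuous_const)
    have h1 : ContinuousAt (fun t => (D t * K + σ2 • 1)⁻¹) 0 :=
      ContinuousAt.comp hinv hg.continuousAt
    have h2 : ContinuousAt (fun t => (D t * K + σ2 • 1)⁻¹ * D t) 0 :=
      h1.mul hDcont.continuousAt
    have h3 : Continuous (fun M : Matrix (Fin (n+1)) (Fin (n+1)) ℝ =>
        kx ⬝ᵥ (M *ᵥ y)) :=
      continuous_const.dotProduct (continuous_id.matrix_mulVec continuous_const)
    exact h3.continuousAt.comp h2
  -- conclude
  have hTF : Tendsto F (nhdsWithin 0 (Set.Ioi 0)) (nhds ((kx ∘ Fin.castSucc) ⬝ᵥ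
      ((K' + σ2 • (Matrix.diagonal w)⁻¹)⁻¹.mulVec (y ∘ Fin.castSucc)))) := by
    rw [← hF0]
    exact hcont.continuousWithinAt
  refine hTF.congr' ?_
  filter_upwards [self_mem_nhdsWithin] with t ht
  exact (hEq t ht).symm
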